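/- Let A be an integral domain which is an ℝ-algebra. Let I₀, J₀ be ℝ-linearly independent imaginary units, let f = f₀ + f₁·ι(I₀) and h = h₀ + h₁·ι(J₀) with f₀, f₁, h₀, h₁ ∈ A and f₁ ≠ 0, h₁ ≠ 0, and let K₀ be an imaginary unit. Then f * h is K₀-sliced if and only if there exist a, b ∈ ℝ and ε ∈ ℝ \ {0} such that K₀ = aI₀ + bJ₀ + ε·(I₀J₀ − J₀I₀)/2 (computed in Quaternion ℝ), ε·f₀ = b·f₁ and ε·h₀ = a·h₁ in A. (Theorem 4.3.) -/

import Mathlib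

open Quaternion

/-- The componentwise extension `ι : ℍ[ℝ] → ℍ[A]` of `algebraMap ℝ A`. -/
noncomputable def qmap {A : Type*} [CommRing A] [Algebra ℝ A] (q : Quaternion ℝ) :
    Quaternion A :=
  ⟨algebraMap ℝ A q.re, algebraMap ℝ A q.imI, algebraMap ℝ A q.imJ, algebraMap ℝ A q.imK⟩

/-- An imaginary unit: a real quaternion with zero real part squaring to `-1`. -/
def IsImaginaryUnit (I : Quaternion ℝ) : Prop := I.re = 0 ∧ I ^ 2 = -1

/-- `q` is `I`-sliced if `q = a + b·ι(I)` for some `a, b ∈ A`. -/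
noncomputable def IsSliced {A : Type*} [CommRing A] [Algebra ℝ A]
    (I : Quaternion ℝ) (q : Quaternion A) : Prop :=
  ∃ a b : A, q = (a : Quaternion A) + (b : Quaternion A) * qmap I

theorem qmul_mk_re {R : Type*} [CommRing R] (p : ℍ[R]) (a b c d : R) :
    (@HMul.hMul ℍ[R] ℍ[R] ℍ[R] _ p ⟨a, b, c, d⟩).re = p.re * a - p.imI * b - p.imJ * c - p.imK * d :=
  Quaternion.re_mul p _

theorem qmul_mk_imI {R : Type*} [CommRing R] (p : ℍ[R]) (a b c d : R) :
    (@HMul.hMul ℍ[R] ℍ[R] ℍ[R] _ p ⟨a, b, c, d⟩).imI = p.re * b + p.imI * a + p.imJ * d - p.imK * c :=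
  Quaternion.imI_mul p _

theorem qmul_mk_imJ {R : Type*} [CommRing R] (p : ℍ[R]) (a b c d : R) :
    (@HMul.hMul ℍ[R] ℍ[R] ℍ[R] _ p ⟨a, b, c, d⟩).imJ = p.re * c - p.imI * d + p.imJ * a + p.imK * b :=
  Quaternion.imJ_mul p _

theorem qmul_mk_imK {R : Type*} [CommRing R] (p : ℍ[R]) (a b c d : R) :
    (@HMul.hMul ℍ[R] ℍ[R] ℍ[R] _ p ⟨a, b, c, d⟩).imK = p.re * d + p.imI * c - p.imJ * b + p.imK * a :=
  Quaternion.imK_mul p _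

theorem mk_qmul_re {R : Type*} [CommRing R] (p : ℍ[R]) (a b c d : R) :
    (@HMul.hMul ℍ[R] ℍ[R] ℍ[R] _ ⟨a, b, c, d⟩ p).re = a * p.re - b * p.imI - c * p.imJ - d * p.imK :=
  Quaternion.re_mul _ p

theorem mk_qmul_imI {R : Type*} [CommRing R] (p : ℍ[R]) (a b c d : R) :
    (@HMul.hMul ℍ[R] ℍ[R] ℍ[R] _ ⟨a, b, c, d⟩ p).imI = a * p.imI + b * p.re + c * p.imK - d * p.imJ :=
  Quaternion.imI_mul _ p

theorem mk_qmul_imJ {R : Type*} [CommRing R] (p : ℍ[R]) (a b c d : R) :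
    (@HMul.hMul ℍ[R] ℍ[R] ℍ[R] _ ⟨a, b, c, d⟩ p).imJ = a * p.imJ - b * p.imK + c * p.re + d * p.imI :=
  Quaternion.imJ_mul _ p

theorem mk_qmul_imK {R : Type*} [CommRing R] (p : ℍ[R]) (a b c d : R) :
    (@HMul.hMul ℍ[R] ℍ[R] ℍ[R] _ ⟨a, b, c, d⟩ p).imK = a * p.imK + b * p.imJ - c * p.imI + d * p.re :=
  Quaternion.imK_mul _ p

theorem qmk_sq {R : Type*} [CommRing R] (a b c d : R) :
    @HPow.hPow ℍ[R] ℕ ℍ[R] _ ⟨a, b, c, d⟩ 2 = @HMul.hMul ℍ[R] ℍ[R] ℍ[R] _ ⟨a, b, c, d⟩ ⟨a, b, c, d⟩ :=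
  pow_two _

theorem qmk_eq_iff {R : Type*} [CommRing R] (a b c d : R) (q : ℍ[R]) :
    @Eq ℍ[R] ⟨a, b, c, d⟩ q ↔ a = q.re ∧ b = q.imI ∧ c = q.imJ ∧ d = q.imK :=
  Quaternion.ext_iff

theorem qsmul_mk_re (t a b c d : ℝ) :
    (@HSMul.hSMul ℝ ℍ[ℝ] ℍ[ℝ] _ t ⟨a, b, c, d⟩).re = t * a :=
  rfl

theorem qsmul_mk_imI (t a b c d : ℝ) :
    (@HSMul.hSMul ℝ ℍ[ℝ] ℍ[ℝ] _ t ⟨a, b, c, d⟩).imI = t * b :=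
  rfl

theorem qsmul_mk_imJ (t a b c d : ℝ) :
    (@HSMul.hSMul ℝ ℍ[ℝ] ℍ[ℝ] _ t ⟨a, b, c, d⟩).imJ = t * c :=
  rfl

theorem qsmul_mk_imK (t a b c d : ℝ) :
    (@HSMul.hSMul ℝ ℍ[ℝ] ℍ[ℝ] _ t ⟨a, b, c, d⟩).imK = t * d :=
  rfl

theorem rmk_mk_mul_re (a b c d x y z w : ℝ) :
    (@HMul.hMul ℍ[ℝ] ℍ[ℝ] ℍ[ℝ] _ ⟨a, b, c, d⟩ ⟨x, y, z, w⟩).re = a * x - b * y - c * z - d * w :=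
  Quaternion.re_mul _ _

theorem rmk_mk_mul_imI (a b c d x y z w : ℝ) :
    (@HMul.hMul ℍ[ℝ] ℍ[ℝ] ℍ[ℝ] _ ⟨a, b, c, d⟩ ⟨x, y, z, w⟩).imI = a * y + b * x + c * w - d * z :=
  Quaternion.imI_mul _ _

theorem rmk_mk_mul_imJ (a b c d x y z w : ℝ) :
    (@HMul.hMul ℍ[ℝ] ℍ[ℝ] ℍ[ℝ] _ ⟨a, b, c, d⟩ ⟨x, y, z, w⟩).imJ = a * z - b * w + c * x + d * y :=
  Quaternion.imJ_mul _ _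

theorem rmk_mk_mul_imK (a b c d x y z w : ℝ) :
    (@HMul.hMul ℍ[ℝ] ℍ[ℝ] ℍ[ℝ] _ ⟨a, b, c, d⟩ ⟨x, y, z, w⟩).imK = a * w + b * z - c * y + d * x :=
  Quaternion.imK_mul _ _

theorem rqmk_sq (a b c d : ℝ) :
    @HPow.hPow ℍ[ℝ] ℕ ℍ[ℝ] _ ⟨a, b, c, d⟩ 2 = @HMul.hMul ℍ[ℝ] ℍ[ℝ] ℍ[ℝ] _ ⟨a, b, c, d⟩ ⟨a, b, c, d⟩ :=
  pow_two _

theorem rqmk_eq_iff (a b c d : ℝ) (q : ℍ[ℝ]) :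
    @Eq ℍ[ℝ] ⟨a, b, c, d⟩ q ↔ a = q.re ∧ b = q.imI ∧ c = q.imJ ∧ d = q.imK :=
  Quaternion.ext_iff

theorem qmk_eq_mk_iff {R : Type*} [CommRing R] (a b c d x y z w : R) :
    @Eq ℍ[R] ⟨a, b, c, d⟩ ⟨x, y, z, w⟩ ↔ a = x ∧ b = y ∧ c = z ∧ d = w :=
  Quaternion.ext_iff

set_option maxHeartbeats 2000000 in
theorem star_product_one_slice_preserving {A : Type*} [CommRing A] [IsDomain A] [Algebra ℝ A]
    (I₀ J₀ K₀ : Quaternion ℝ)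
    (hI₀ : IsImaginaryUnit I₀) (hJ₀ : IsImaginaryUnit J₀) (hK₀ : IsImaginaryUnit K₀)
    (hind : LinearIndependent ℝ ![I₀, J₀])
    (f₀ f₁ h₀ h₁ : A) (hf₁ : f₁ ≠ 0) (hh₁ : h₁ ≠ 0)
    (f h : Quaternion A)
    (hf : f = (f₀ : Quaternion A) + (f₁ : Quaternion A) * qmap I₀)
    (hh : h = (h₀ : Quaternion A) + (h₁ : Quaternion A) * qmap J₀) :
    IsSliced K₀ (f * h) ↔
      ∃ a b ε : ℝ, ε ≠ 0 ∧
        K₀ = a • I₀ + b • J₀ + ε • ((2 : ℝ)⁻¹ • (I₀ * J₀ - J₀ * I₀)) ∧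
        algebraMap ℝ A ε * f₀ = algebraMap ℝ A b * f₁ ∧
        algebraMap ℝ A ε * h₀ = algebraMap ℝ A a * h₁ := by
  obtain ⟨hire, hisq⟩ := hI₀
  obtain ⟨hjre, hjsq⟩ := hJ₀
  obtain ⟨hkre, _⟩ := hK₀
  obtain ⟨i0, i1, i2, i3⟩ := I₀
  obtain ⟨j0, j1, j2, j3⟩ := J₀
  obtain ⟨k0, k1, k2, k3⟩ := K₀
  obtain rfl : i0 = 0 := hire
  obtain rfl : j0 = 0 := hjre
  obtain rfl : k0 = 0 := hkre
  have ni : i1*i1+i2*i2+i3*i3 = 1 := by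
    have h' := congrArg QuaternionAlgebra.re hisq
    rw [rqmk_sq, rmk_mk_mul_re] at h'
    simp at h'
    linarith
  have nj : j1*j1+j2*j2+j3*j3 = 1 := by
    have h' := congrArg QuaternionAlgebra.re hjsq
    rw [rqmk_sq, rmk_mk_mul_re] at h'
    simp at h'
    linarith
  replace hind := (LinearIndependent.pair_iff (M := ℍ[ℝ])).mp hind
  have hD : 1 - (i1*j1+i2*j2+i3*j3)^2 ≠ 0 := by
    intro h0
    obtain ⟨t, ht⟩ : ∃ t : ℝ, t = i1*j1+i2*j2+i3*j3 := ⟨_, rfl⟩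
    rw [← ht] at h0
    have hs : (j1-t*i1)^2 + (j2-t*i2)^2 + (j3-t*i3)^2 = 0 := by
      linear_combination nj + t^2*ni + h0 + 2*t*ht
    have q1 : j1 - t*i1 = 0 := by
      have : (j1-t*i1)^2 = 0 := by nlinarith [sq_nonneg (j2-t*i2), sq_nonneg (j3-t*i3)]
      exact pow_eq_zero_iff (by norm_num) |>.mp this
    have q2 : j2 - t*i2 = 0 := by
      have : (j2-t*i2)^2 = 0 := by nlinarith [sq_nonneg (j1-t*i1), sq_nonneg (j3-t*i3)]
      exact pow_eq_zero_iff (by norm_num) |>.mp this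
    have q3 : j3 - t*i3 = 0 := by
      have : (j3-t*i3)^2 = 0 := by nlinarith [sq_nonneg (j1-t*i1), sq_nonneg (j2-t*i2)]
      exact pow_eq_zero_iff (by norm_num) |>.mp this
    have := hind t (-1) (by apply Quaternion.ext <;> simp [qsmul_mk_re, qsmul_mk_imI, qsmul_mk_imJ, qsmul_mk_imK, rmk_mk_mul_re, rmk_mk_mul_imI, rmk_mk_mul_imJ, rmk_mk_mul_imK] <;> linarith)
    linarith [this.2]
  have hφ : Function.Injective (algebraMap ℝ A) := RingHom.injective _
  have nxA : (algebraMap ℝ A i1)*(algebraMap ℝ A i1) + (algebraMap ℝ A i2)*(algebraMap ℝ A i2)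
      + (algebraMap ℝ A i3)*(algebraMap ℝ A i3) = 1 := by
    simpa only [map_add, map_mul, map_one] using congrArg (algebraMap ℝ A) ni
  have nyA : (algebraMap ℝ A j1)*(algebraMap ℝ A j1) + (algebraMap ℝ A j2)*(algebraMap ℝ A j2)
      + (algebraMap ℝ A j3)*(algebraMap ℝ A j3) = 1 := by
    simpa only [map_add, map_mul, map_one] using congrArg (algebraMap ℝ A) nj
  have hexpr : (algebraMap ℝ A i1*algebraMap ℝ A i1 + algebraMap ℝ A i2*algebraMap ℝ A i2
        + algebraMap ℝ A i3*algebraMap ℝ A i3) *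
      (algebraMap ℝ A j1*algebraMap ℝ A j1 + algebraMap ℝ A j2*algebraMap ℝ A j2
        + algebraMap ℝ A j3*algebraMap ℝ A j3) -
      (algebraMap ℝ A i1*algebraMap ℝ A j1 + algebraMap ℝ A i2*algebraMap ℝ A j2
        + algebraMap ℝ A i3*algebraMap ℝ A j3)^2
      = algebraMap ℝ A (1 - (i1*j1+i2*j2+i3*j3)^2) := by
    simp only [map_sub, map_one, map_pow, map_add, map_mul]
    linear_combination (algebraMap ℝ A j1*algebraMap ℝ A j1 + algebraMap ℝ A j2*algebraMap ℝ A j2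
        + algebraMap ℝ A j3*algebraMap ℝ A j3)*nxA + nyA
  have hexpr0 : (algebraMap ℝ A i1*algebraMap ℝ A i1 + algebraMap ℝ A i2*algebraMap ℝ A i2
        + algebraMap ℝ A i3*algebraMap ℝ A i3) *
      (algebraMap ℝ A j1*algebraMap ℝ A j1 + algebraMap ℝ A j2*algebraMap ℝ A j2
        + algebraMap ℝ A j3*algebraMap ℝ A j3) -
      (algebraMap ℝ A i1*algebraMap ℝ A j1 + algebraMap ℝ A i2*algebraMap ℝ A j2
        + algebraMap ℝ A i3*algebraMap ℝ A j3)^2 ≠ 0 := by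
    rw [hexpr]
    intro hc
    exact hD (hφ (by rw [hc, map_zero]))
  rw [hf, hh]
  have hfh : ((f₀ : Quaternion A) + (f₁ : Quaternion A) * qmap ⟨0,i1,i2,i3⟩) *
      ((h₀ : Quaternion A) + (h₁ : Quaternion A) * qmap ⟨0,j1,j2,j3⟩) =
    ⟨f₀*h₀ - f₁*h₁*(algebraMap ℝ A i1*algebraMap ℝ A j1 + algebraMap ℝ A i2*algebraMap ℝ A j2 + algebraMap ℝ A i3*algebraMap ℝ A j3),
     f₁*h₀*algebraMap ℝ A i1 + f₀*h₁*algebraMap ℝ A j1 + f₁*h₁*(algebraMap ℝ A i2*algebraMap ℝ A j3 - algebraMap ℝ A i3*algebraMap ℝ A j2),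
     f₁*h₀*algebraMap ℝ A i2 + f₀*h₁*algebraMap ℝ A j2 + f₁*h₁*(algebraMap ℝ A i3*algebraMap ℝ A j1 - algebraMap ℝ A i1*algebraMap ℝ A j3),
     f₁*h₀*algebraMap ℝ A i3 + f₀*h₁*algebraMap ℝ A j3 + f₁*h₁*(algebraMap ℝ A i1*algebraMap ℝ A j2 - algebraMap ℝ A i2*algebraMap ℝ A j1)⟩ := by
    apply Quaternion.ext <;>
      simp [qmap, Quaternion.re_mul, Quaternion.imI_mul, Quaternion.imJ_mul, Quaternion.imK_mul, qmul_mk_re, qmul_mk_imI, qmul_mk_imJ, qmul_mk_imK, mk_qmul_re, mk_qmul_imI, mk_qmul_imJ, mk_qmul_imK, qsmul_mk_re, qsmul_mk_imI, qsmul_mk_imJ, qsmul_mk_imK, rmk_mk_mul_re, rmk_mk_mul_imI, rmk_mk_mul_imJ, rmk_mk_mul_imK] <;> ring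
  have hrhs : ∀ a' b' : A, (a' : Quaternion A) + (b' : Quaternion A) * qmap ⟨0,k1,k2,k3⟩ =
      ⟨a', b'*algebraMap ℝ A k1, b'*algebraMap ℝ A k2, b'*algebraMap ℝ A k3⟩ := by
    intro a' b'
    apply Quaternion.ext <;> simp [qmap, qmul_mk_re, qmul_mk_imI, qmul_mk_imJ, qmul_mk_imK, mk_qmul_re, mk_qmul_imI, mk_qmul_imJ, mk_qmul_imK, qsmul_mk_re, qsmul_mk_imI, qsmul_mk_imJ, qsmul_mk_imK, rmk_mk_mul_re, rmk_mk_mul_imI, rmk_mk_mul_imJ, rmk_mk_mul_imK]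
  simp only [IsSliced, hfh, hrhs, qmk_eq_mk_iff, rqmk_eq_iff]
  constructor
  · rintro ⟨a', b', E0, E1, E2, E3⟩
    obtain ⟨a, b, e, c1, c2, c3⟩ :
        ∃ a b e : ℝ,
          (k1 = a*i1+b*j1+e*(i2*j3-i3*j2)) ∧ (k2 = a*i2+b*j2+e*(i3*j1-i1*j3)) ∧
          (k3 = a*i3+b*j3+e*(i1*j2-i2*j1)) := by
      refine ⟨(k1*(j2*(i1*j2-i2*j1)-j3*(i3*j1-i1*j3))+k2*(j3*(i2*j3-i3*j2)-j1*(i1*j2-i2*j1))+k3*(j1*(i3*j1-i1*j3)-j2*(i2*j3-i3*j2)))/(1 - (i1*j1+i2*j2+i3*j3)^2),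
             (i1*(k2*(i1*j2-i2*j1)-k3*(i3*j1-i1*j3))+i2*(k3*(i2*j3-i3*j2)-k1*(i1*j2-i2*j1))+i3*(k1*(i3*j1-i1*j3)-k2*(i2*j3-i3*j2)))/(1 - (i1*j1+i2*j2+i3*j3)^2),
             (i1*(j2*k3-j3*k2)+i2*(j3*k1-j1*k3)+i3*(j1*k2-j2*k1))/(1 - (i1*j1+i2*j2+i3*j3)^2),
             ?_, ?_, ?_⟩
      · rw [div_mul_eq_mul_div, div_mul_eq_mul_div, div_mul_eq_mul_div, ← add_div, ← add_div, eq_div_iff hD]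
        linear_combination -k1*((i1*i1+i2*i2+i3*i3)*nj + ni)
      · rw [div_mul_eq_mul_div, div_mul_eq_mul_div, div_mul_eq_mul_div, ← add_div, ← add_div, eq_div_iff hD]
        linear_combination -k2*((i1*i1+i2*i2+i3*i3)*nj + ni)
      · rw [div_mul_eq_mul_div, div_mul_eq_mul_div, div_mul_eq_mul_div, ← add_div, ← add_div, eq_div_iff hD]
        linear_combination -k3*((i1*i1+i2*i2+i3*i3)*nj + ni)
    have c1A : algebraMap ℝ A k1 = algebraMap ℝ A a * algebraMap ℝ A i1
        + algebraMap ℝ A b * algebraMap ℝ A j1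
        + algebraMap ℝ A e * (algebraMap ℝ A i2*algebraMap ℝ A j3 - algebraMap ℝ A i3*algebraMap ℝ A j2) := by
      simpa only [map_add, map_mul, map_sub] using congrArg (algebraMap ℝ A) c1
    have c2A : algebraMap ℝ A k2 = algebraMap ℝ A a * algebraMap ℝ A i2
        + algebraMap ℝ A b * algebraMap ℝ A j2
        + algebraMap ℝ A e * (algebraMap ℝ A i3*algebraMap ℝ A j1 - algebraMap ℝ A i1*algebraMap ℝ A j3) := by
      simpa only [map_add, map_mul, map_sub] using congrArg (algebraMap ℝ A) c2
    have c3A : algebraMap ℝ A k3 = algebraMap ℝ A a * algebraMap ℝ A i3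
        + algebraMap ℝ A b * algebraMap ℝ A j3
        + algebraMap ℝ A e * (algebraMap ℝ A i1*algebraMap ℝ A j2 - algebraMap ℝ A i2*algebraMap ℝ A j1) := by
      simpa only [map_add, map_mul, map_sub] using congrArg (algebraMap ℝ A) c3
    have E1' : (f₁*h₀ - b'*algebraMap ℝ A a)*algebraMap ℝ A i1
        + (f₀*h₁ - b'*algebraMap ℝ A b)*algebraMap ℝ A j1
        + (f₁*h₁ - b'*algebraMap ℝ A e)*(algebraMap ℝ A i2*algebraMap ℝ A j3 - algebraMap ℝ A i3*algebraMap ℝ A j2) = 0 := by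
      linear_combination E1 + b' * c1A
    have E2' : (f₁*h₀ - b'*algebraMap ℝ A a)*algebraMap ℝ A i2
        + (f₀*h₁ - b'*algebraMap ℝ A b)*algebraMap ℝ A j2
        + (f₁*h₁ - b'*algebraMap ℝ A e)*(algebraMap ℝ A i3*algebraMap ℝ A j1 - algebraMap ℝ A i1*algebraMap ℝ A j3) = 0 := by
      linear_combination E2 + b' * c2A
    have E3' : (f₁*h₀ - b'*algebraMap ℝ A a)*algebraMap ℝ A i3
        + (f₀*h₁ - b'*algebraMap ℝ A b)*algebraMap ℝ A j3
        + (f₁*h₁ - b'*algebraMap ℝ A e)*(algebraMap ℝ A i1*algebraMap ℝ A j2 - algebraMap ℝ A i2*algebraMap ℝ A j1) = 0 := by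
      linear_combination E3 + b' * c3A
    obtain ⟨X1, hX1⟩ : ∃ x, x = algebraMap ℝ A i1 := ⟨_, rfl⟩
    obtain ⟨X2, hX2⟩ : ∃ x, x = algebraMap ℝ A i2 := ⟨_, rfl⟩
    obtain ⟨X3, hX3⟩ : ∃ x, x = algebraMap ℝ A i3 := ⟨_, rfl⟩
    obtain ⟨Y1, hY1⟩ : ∃ x, x = algebraMap ℝ A j1 := ⟨_, rfl⟩
    obtain ⟨Y2, hY2⟩ : ∃ x, x = algebraMap ℝ A j2 := ⟨_, rfl⟩
    obtain ⟨Y3, hY3⟩ : ∃ x, x = algebraMap ℝ A j3 := ⟨_, rfl⟩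
    rw [← hX1, ← hX2, ← hX3, ← hY1, ← hY2, ← hY3] at E1' E2' E3' hexpr0
    have P1 : f₁*h₀ - b'*algebraMap ℝ A a = 0 := by
      have h0 : (f₁*h₀ - b'*algebraMap ℝ A a) *
          ((X1*X1+X2*X2+X3*X3)*(Y1*Y1+Y2*Y2+Y3*Y3) - (X1*Y1+X2*Y2+X3*Y3)^2) = 0 := by
        linear_combination (Y2*(X1*Y2-X2*Y1) - Y3*(X3*Y1-X1*Y3))*E1' + (Y3*(X2*Y3-X3*Y2) - Y1*(X1*Y2-X2*Y1))*E2' + (Y1*(X3*Y1-X1*Y3) - Y2*(X2*Y3-X3*Y2))*E3'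
      exact (mul_eq_zero.mp h0).resolve_right hexpr0
    have P2 : f₀*h₁ - b'*algebraMap ℝ A b = 0 := by
      have h0 : (f₀*h₁ - b'*algebraMap ℝ A b) *
          ((X1*X1+X2*X2+X3*X3)*(Y1*Y1+Y2*Y2+Y3*Y3) - (X1*Y1+X2*Y2+X3*Y3)^2) = 0 := by
        linear_combination ((X3*Y1-X1*Y3)*X3 - (X1*Y2-X2*Y1)*X2)*E1' + ((X1*Y2-X2*Y1)*X1 - (X2*Y3-X3*Y2)*X3)*E2' + ((X2*Y3-X3*Y2)*X2 - (X3*Y1-X1*Y3)*X1)*E3'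
      exact (mul_eq_zero.mp h0).resolve_right hexpr0
    have P3 : f₁*h₁ - b'*algebraMap ℝ A e = 0 := by
      have h0 : (f₁*h₁ - b'*algebraMap ℝ A e) *
          ((X1*X1+X2*X2+X3*X3)*(Y1*Y1+Y2*Y2+Y3*Y3) - (X1*Y1+X2*Y2+X3*Y3)^2) = 0 := by
        linear_combination (X2*Y3-X3*Y2)*E1' + (X3*Y1-X1*Y3)*E2' + (X1*Y2-X2*Y1)*E3'
      exact (mul_eq_zero.mp h0).resolve_right hexpr0
    have hfh1 : f₁*h₁ ≠ 0 := mul_ne_zero hf₁ hh₁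
    have he0 : e ≠ 0 := by
      rintro rfl
      rw [map_zero, mul_zero, sub_zero] at P3
      exact hfh1 P3
    have hb' : b' ≠ 0 := by
      rintro rfl
      rw [zero_mul, sub_zero] at P3
      exact hfh1 P3
    refine ⟨a, b, e, he0, ⟨?_, ?_, ?_, ?_⟩, ?_, ?_⟩
    · simp [Quaternion.re_mul, Quaternion.imI_mul, Quaternion.imJ_mul, Quaternion.imK_mul, qmul_mk_re, qmul_mk_imI, qmul_mk_imJ, qmul_mk_imK, mk_qmul_re, mk_qmul_imI, mk_qmul_imJ, mk_qmul_imK, qsmul_mk_re, qsmul_mk_imI, qsmul_mk_imJ, qsmul_mk_imK, rmk_mk_mul_re, rmk_mk_mul_imI, rmk_mk_mul_imJ, rmk_mk_mul_imK]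
      exact Or.inr (by ring)
    · simp [Quaternion.re_mul, Quaternion.imI_mul, Quaternion.imJ_mul, Quaternion.imK_mul, qmul_mk_re, qmul_mk_imI, qmul_mk_imJ, qmul_mk_imK, mk_qmul_re, mk_qmul_imI, mk_qmul_imJ, mk_qmul_imK, qsmul_mk_re, qsmul_mk_imI, qsmul_mk_imJ, qsmul_mk_imK, rmk_mk_mul_re, rmk_mk_mul_imI, rmk_mk_mul_imJ, rmk_mk_mul_imK]
      linear_combination c1
    · simp [Quaternion.re_mul, Quaternion.imI_mul, Quaternion.imJ_mul, Quaternion.imK_mul, qmul_mk_re, qmul_mk_imI, qmul_mk_imJ, qmul_mk_imK, mk_qmul_re, mk_qmul_imI, mk_qmul_imJ, mk_qmul_imK, qsmul_mk_re, qsmul_mk_imI, qsmul_mk_imJ, qsmul_mk_imK, rmk_mk_mul_re, rmk_mk_mul_imI, rmk_mk_mul_imJ, rmk_mk_mul_imK]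
      linear_combination c2
    · simp [Quaternion.re_mul, Quaternion.imI_mul, Quaternion.imJ_mul, Quaternion.imK_mul, qmul_mk_re, qmul_mk_imI, qmul_mk_imJ, qmul_mk_imK, mk_qmul_re, mk_qmul_imI, mk_qmul_imJ, mk_qmul_imK, qsmul_mk_re, qsmul_mk_imI, qsmul_mk_imJ, qsmul_mk_imK, rmk_mk_mul_re, rmk_mk_mul_imI, rmk_mk_mul_imJ, rmk_mk_mul_imK]
      linear_combination c3
    · have hcan : b' * (algebraMap ℝ A e * f₀) = b' * (algebraMap ℝ A b * f₁) := by
        linear_combination f₁*P2 - f₀*P3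
      exact mul_left_cancel₀ hb' hcan
    · have hcan : b' * (algebraMap ℝ A e * h₀) = b' * (algebraMap ℝ A a * h₁) := by
        linear_combination h₁*P1 - h₀*P3
      exact mul_left_cancel₀ hb' hcan
  · rintro ⟨a, b, e, he0, ⟨hK0, hK1, hK2, hK3⟩, hfr, hhr⟩
    have c1 : k1 = a*i1+b*j1+e*(i2*j3-i3*j2) := by
      have := hK1
      simp [Quaternion.imI_mul, qmul_mk_re, qmul_mk_imI, qmul_mk_imJ, qmul_mk_imK, mk_qmul_re, mk_qmul_imI, mk_qmul_imJ, mk_qmul_imK, qsmul_mk_re, qsmul_mk_imI, qsmul_mk_imJ, qsmul_mk_imK, rmk_mk_mul_re, rmk_mk_mul_imI, rmk_mk_mul_imJ, rmk_mk_mul_imK] at this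
      linear_combination this
    have c2 : k2 = a*i2+b*j2+e*(i3*j1-i1*j3) := by
      have := hK2
      simp [Quaternion.imJ_mul, qmul_mk_re, qmul_mk_imI, qmul_mk_imJ, qmul_mk_imK, mk_qmul_re, mk_qmul_imI, mk_qmul_imJ, mk_qmul_imK, qsmul_mk_re, qsmul_mk_imI, qsmul_mk_imJ, qsmul_mk_imK, rmk_mk_mul_re, rmk_mk_mul_imI, rmk_mk_mul_imJ, rmk_mk_mul_imK] at this
      linear_combination this
    have c3 : k3 = a*i3+b*j3+e*(i1*j2-i2*j1) := by
      have := hK3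
      simp [Quaternion.imK_mul, qmul_mk_re, qmul_mk_imI, qmul_mk_imJ, qmul_mk_imK, mk_qmul_re, mk_qmul_imI, mk_qmul_imJ, mk_qmul_imK, qsmul_mk_re, qsmul_mk_imI, qsmul_mk_imJ, qsmul_mk_imK, rmk_mk_mul_re, rmk_mk_mul_imI, rmk_mk_mul_imJ, rmk_mk_mul_imK] at this
      linear_combination this
    have c1A : algebraMap ℝ A k1 = algebraMap ℝ A a * algebraMap ℝ A i1
        + algebraMap ℝ A b * algebraMap ℝ A j1
        + algebraMap ℝ A e * (algebraMap ℝ A i2*algebraMap ℝ A j3 - algebraMap ℝ A i3*algebraMap ℝ A j2) := by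
      simpa only [map_add, map_mul, map_sub] using congrArg (algebraMap ℝ A) c1
    have c2A : algebraMap ℝ A k2 = algebraMap ℝ A a * algebraMap ℝ A i2
        + algebraMap ℝ A b * algebraMap ℝ A j2
        + algebraMap ℝ A e * (algebraMap ℝ A i3*algebraMap ℝ A j1 - algebraMap ℝ A i1*algebraMap ℝ A j3) := by
      simpa only [map_add, map_mul, map_sub] using congrArg (algebraMap ℝ A) c2
    have c3A : algebraMap ℝ A k3 = algebraMap ℝ A a * algebraMap ℝ A i3
        + algebraMap ℝ A b * algebraMap ℝ A j3
        + algebraMap ℝ A e * (algebraMap ℝ A i1*algebraMap ℝ A j2 - algebraMap ℝ A i2*algebraMap ℝ A j1) := by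
      simpa only [map_add, map_mul, map_sub] using congrArg (algebraMap ℝ A) c3
    have hinv : algebraMap ℝ A e⁻¹ * algebraMap ℝ A e = 1 := by
      rw [← map_mul, inv_mul_cancel₀ he0, map_one]
    refine ⟨f₀*h₀ - f₁*h₁*(algebraMap ℝ A i1*algebraMap ℝ A j1 + algebraMap ℝ A i2*algebraMap ℝ A j2
        + algebraMap ℝ A i3*algebraMap ℝ A j3),
      algebraMap ℝ A e⁻¹ * (f₁*h₁), rfl, ?_, ?_, ?_⟩
    · rw [c1A]
      linear_combination (algebraMap ℝ A e⁻¹*f₁*algebraMap ℝ A i1)*hhr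
        + (algebraMap ℝ A e⁻¹*h₁*algebraMap ℝ A j1)*hfr
        - (f₁*h₀*algebraMap ℝ A i1 + f₀*h₁*algebraMap ℝ A j1
            + f₁*h₁*(algebraMap ℝ A i2*algebraMap ℝ A j3 - algebraMap ℝ A i3*algebraMap ℝ A j2))*hinv
    · rw [c2A]
      linear_combination (algebraMap ℝ A e⁻¹*f₁*algebraMap ℝ A i2)*hhr
        + (algebraMap ℝ A e⁻¹*h₁*algebraMap ℝ A j2)*hfr
        - (f₁*h₀*algebraMap ℝ A i2 + f₀*h₁*algebraMap ℝ A j2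
            + f₁*h₁*(algebraMap ℝ A i3*algebraMap ℝ A j1 - algebraMap ℝ A i1*algebraMap ℝ A j3))*hinv
    · rw [c3A]
      linear_combination (algebraMap ℝ A e⁻¹*f₁*algebraMap ℝ A i3)*hhr
        + (algebraMap ℝ A e⁻¹*h₁*algebraMap ℝ A j3)*hfr
        - (f₁*h₀*algebraMap ℝ A i3 + f₀*h₁*algebraMap ℝ A j3
            + f₁*h₁*(algebraMap ℝ A i1*algebraMap ℝ A j2 - algebraMap ℝ A i2*algebraMap ℝ A j1))*hinv
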